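/- Let p₀, p₁, p₂, q₀, q₁ ∈ ℂ with p₀ ≠ 0 and q₀ ≠ 0. Let F be a nonzero formal Laurent series over ℂ in the variable s (so F ∈ ℂ((s)), with s representing t^{-1}), satisfying the equation −2s⁴·dF/ds = −s²(p₁s − p₀)·F² + ((p₂/p₀)s² + 2s³ − 1)·F + q₁·s + q₀ in ℂ((s)). Then the order of F is either 0 or −2; that is, F = ∑_{n≥0} c_n s^n with c₀ ≠ 0, or F = s^{-2}·∑_{n≥0} d_n s^n with d₀ ≠ 0. -/

import Mathlib

/-- Formal derivative `dF/ds` of a formal Laurent series. -/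
noncomputable def lderiv (F : LaurentSeries ℂ) : LaurentSeries ℂ where
  coeff n := ((n + 1 : ℤ) : ℂ) * F.coeff (n + 1)
  isPWO_support' := by
    apply Set.IsPWO.mono
      (F.isPWO_support'.image_of_monotone
        (fun a b h => sub_le_sub_right h 1 : Monotone fun m : ℤ => m - 1))
    intro n hn
    simp only [Function.mem_support] at hn
    refine ⟨n + 1, ?_, by ring⟩
    simp only [HahnSeries.support, Function.mem_support]
    intro h
    exact hn (by rw [h, mul_zero])

lemma coeff_single_mul (a k : ℤ) (x : ℂ) (G : LaurentSeries ℂ) :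
    (HahnSeries.single a x * G).coeff k = x * G.coeff (k - a) := by
  have := HahnSeries.coeff_single_mul_add (r := x) (x := G) (a := k - a) (b := a)
  simpa using this

lemma coeff_lderiv (F : LaurentSeries ℂ) (n : ℤ) :
    (lderiv F).coeff n = ((n + 1 : ℤ) : ℂ) * F.coeff (n + 1) := rfl

/-- **Proposition 3.1.** A nonzero formal Laurent series solution `F ∈ ℂ((s))` of the
Riccati equation `2t∂ₜF = −(p₁ − tp₀)F² + ((p₂/p₀)t + 2 − t³)F + t²(q₁ + tq₀)`,
rewritten in `s = t^{-1}` as `−2s⁴ dF/ds = −s²(p₁s − p₀)F² + ((p₂/p₀)s² + 2s³ − 1)F + q₁s + q₀`,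
has order `0` or `−2`: only the two kinds of power-series solutions
`F = ∑ c_n t^{-n}` and `F = t² ∑ d_n t^{-n}` occur. -/
theorem riccati_laurent_solutions_order
    (p₀ p₁ p₂ q₀ q₁ : ℂ) (hp₀ : p₀ ≠ 0) (hq₀ : q₀ ≠ 0)
    (F : LaurentSeries ℂ) (hF : F ≠ 0)
    (heq : -2 * HahnSeries.single (4 : ℤ) (1 : ℂ) * lderiv F =
        -(HahnSeries.single (2 : ℤ) (1 : ℂ))
            * (HahnSeries.single (1 : ℤ) p₁ - HahnSeries.single (0 : ℤ) p₀) * F ^ 2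
          + (HahnSeries.single (2 : ℤ) (p₂ / p₀)
              + 2 * HahnSeries.single (3 : ℤ) (1 : ℂ) - 1) * F
          + HahnSeries.single (1 : ℤ) q₁ + HahnSeries.single (0 : ℤ) q₀) :
    F.order = 0 ∨ F.order = -2 := by
  set N := F.order with hN
  have hc : F.coeff N ≠ 0 := mt HahnSeries.coeff_order_eq_zero.mp hF
  -- order facts for F^2
  have hF2ord : (F ^ 2).order = 2 * N := by
    rw [sq, HahnSeries.order_mul hF hF, two_mul]
  have hlc : F.leadingCoeff = F.coeff N := by
    rw [HahnSeries.leadingCoeff_eq]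
  have hF2lead : (F ^ 2).coeff (2 * N) = F.coeff N * F.coeff N := by
    rw [sq, two_mul, hN]
    rw [← hlc]
    exact HahnSeries.coeff_mul_order_add_order F F
  have hF2z : ∀ m : ℤ, m < 2 * N → (F ^ 2).coeff m = 0 := fun m hm =>
    HahnSeries.coeff_eq_zero_of_lt_order (by rw [hF2ord]; exact hm)
  have hFz : ∀ m : ℤ, m < N → F.coeff m = 0 := fun m hm =>
    HahnSeries.coeff_eq_zero_of_lt_order hm
  -- helper lemmas about singles
  have sadd : ∀ (a : ℤ) (x y : ℂ),
      (HahnSeries.single a x + HahnSeries.single a y : LaurentSeries ℂ)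
        = HahnSeries.single a (x + y) :=
    fun a x y => (map_add (HahnSeries.single.addMonoidHom a) x y).symm
  have sneg : ∀ (a : ℤ) (x : ℂ),
      (HahnSeries.single a (-x) : LaurentSeries ℂ) = -HahnSeries.single a x :=
    fun a x => map_neg (HahnSeries.single.addMonoidHom a) x
  have e4 : (-2 : LaurentSeries ℂ) * HahnSeries.single (4 : ℤ) (1 : ℂ)
      = HahnSeries.single (4 : ℤ) (-2 : ℂ) := by
    rw [show (-2 : LaurentSeries ℂ) * HahnSeries.single (4 : ℤ) (1 : ℂ)
      = -(HahnSeries.single (4 : ℤ) (1 : ℂ) + HahnSeries.single (4 : ℤ) (1 : ℂ)) by ring,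
      sadd, ← sneg]
    norm_num
  have e2 : (2 : LaurentSeries ℂ) * HahnSeries.single (3 : ℤ) (1 : ℂ)
      = HahnSeries.single (3 : ℤ) (2 : ℂ) := by
    rw [show (2 : LaurentSeries ℂ) * HahnSeries.single (3 : ℤ) (1 : ℂ)
      = HahnSeries.single (3 : ℤ) (1 : ℂ) + HahnSeries.single (3 : ℤ) (1 : ℂ) by ring, sadd]
    norm_num
  have e3 : -(HahnSeries.single (2 : ℤ) (1 : ℂ)) * HahnSeries.single (1 : ℤ) p₁
      = (HahnSeries.single (3 : ℤ) (-p₁) : LaurentSeries ℂ) := by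
    rw [show -(HahnSeries.single (2 : ℤ) (1 : ℂ)) * HahnSeries.single (1 : ℤ) p₁
      = -(HahnSeries.single (2 : ℤ) (1 : ℂ) * HahnSeries.single (1 : ℤ) p₁) by ring,
      HahnSeries.single_mul_single, sneg]
    norm_num
  have e5 : HahnSeries.single (2 : ℤ) (1 : ℂ) * HahnSeries.single (0 : ℤ) p₀
      = (HahnSeries.single (2 : ℤ) p₀ : LaurentSeries ℂ) := by
    rw [HahnSeries.single_mul_single]; norm_num
  -- rewrite the equation with singles collected
  have heq' : HahnSeries.single (4 : ℤ) (-2 : ℂ) * lderiv F =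
      HahnSeries.single (3 : ℤ) (-p₁) * F ^ 2 + HahnSeries.single (2 : ℤ) p₀ * F ^ 2
        + HahnSeries.single (2 : ℤ) (p₂ / p₀) * F + HahnSeries.single (3 : ℤ) (2 : ℂ) * F - F
        + HahnSeries.single (1 : ℤ) q₁ + HahnSeries.single (0 : ℤ) q₀ := by
    have expand1 : -(HahnSeries.single (2 : ℤ) (1 : ℂ))
          * (HahnSeries.single (1 : ℤ) p₁ - HahnSeries.single (0 : ℤ) p₀) * F ^ 2
        = HahnSeries.single (3 : ℤ) (-p₁) * F ^ 2 + HahnSeries.single (2 : ℤ) p₀ * F ^ 2 := by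
      rw [← e3, ← e5]; ring
    have expand2 : (HahnSeries.single (2 : ℤ) (p₂ / p₀)
          + 2 * HahnSeries.single (3 : ℤ) (1 : ℂ) - 1) * F
        = HahnSeries.single (2 : ℤ) (p₂ / p₀) * F + HahnSeries.single (3 : ℤ) (2 : ℂ) * F - F := by
      rw [← e2]; ring
    rw [← e4, show (-2 : LaurentSeries ℂ) * HahnSeries.single (4 : ℤ) (1 : ℂ) * lderiv F
      = -2 * HahnSeries.single (4 : ℤ) (1 : ℂ) * lderiv F by ring, heq, expand1, expand2]
    ring
  -- extract the coefficient identity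
  have key : ∀ k : ℤ,
      (-2 : ℂ) * (((k - 3 : ℤ) : ℂ) * F.coeff (k - 3)) =
        -p₁ * (F ^ 2).coeff (k - 3) + p₀ * (F ^ 2).coeff (k - 2)
          + (p₂ / p₀) * F.coeff (k - 2) + 2 * F.coeff (k - 3) - F.coeff k
          + (HahnSeries.single (1 : ℤ) q₁ : LaurentSeries ℂ).coeff k
          + (HahnSeries.single (0 : ℤ) q₀ : LaurentSeries ℂ).coeff k := by
    intro k
    have h := congrArg (fun G : LaurentSeries ℂ => G.coeff k) heq'
    simp only [coeff_single_mul, HahnSeries.coeff_add, HahnSeries.coeff_sub,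
      coeff_lderiv] at h
    have e1 : k - 4 + 1 = k - 3 := by ring
    rw [e1] at h
    rw [show ((-2 : ℂ)) * (((k - 3 : ℤ) : ℂ) * F.coeff (k - 3))
      = -2 * (((k - 3 : ℤ) : ℂ) * F.coeff (k - 3)) by ring]
    convert h using 2
  -- now the case analysis
  by_contra hcon
  push_neg at hcon
  obtain ⟨h0, h2⟩ := hcon
  rcases lt_trichotomy N 0 with hneg | hz | hpos
  · -- N < 0, N ≠ -2 : either N = -1 or N < -2
    rcases lt_trichotomy N (-2) with hlt | he | hgt
    · -- N ≤ -3 : look at coefficient 2N + 2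
      have hk := key (2 * N + 2)
      have e1 : 2 * N + 2 - 3 = 2 * N - 1 := by ring
      have e2 : 2 * N + 2 - 2 = 2 * N := by ring
      rw [e1, e2] at hk
      rw [hF2z _ (by omega), hFz _ (by omega), hFz _ (by omega), hFz _ (by omega),
        hF2lead] at hk
      rw [HahnSeries.coeff_single, HahnSeries.coeff_single] at hk
      rw [if_neg (by omega), if_neg (by omega)] at hk
      simp only [mul_zero, zero_mul, add_zero, zero_add, neg_zero, sub_zero] at hk
      exact (mul_ne_zero hp₀ (mul_ne_zero hc hc)) hk.symm
    · exact h2 he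
    · -- N = -1 : look at coefficient -1
      have hN1 : N = -1 := by omega
      have hk := key (-1)
      have e1 : (-1 : ℤ) - 3 = -4 := by norm_num
      have e2 : (-1 : ℤ) - 2 = -3 := by norm_num
      rw [e1, e2] at hk
      rw [hF2z _ (by omega), hF2z _ (by omega), hFz _ (by omega), hFz _ (by omega)] at hk
      rw [HahnSeries.coeff_single, HahnSeries.coeff_single] at hk
      rw [if_neg (by norm_num), if_neg (by norm_num)] at hk
      simp only [mul_zero, zero_mul, add_zero, zero_add, neg_zero, sub_zero, zero_sub] at hk
      rw [← hN1] at hk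
      exact hc (neg_eq_zero.mp hk.symm)
  · exact h0 hz
  · -- N > 0 : look at coefficient 0
    have hk := key 0
    have e1 : (0 : ℤ) - 3 = -3 := by norm_num
    have e2 : (0 : ℤ) - 2 = -2 := by norm_num
    rw [e1, e2] at hk
    rw [hF2z _ (by omega), hF2z _ (by omega), hFz _ (by omega), hFz _ (by omega),
      hFz _ (by omega)] at hk
    rw [HahnSeries.coeff_single, HahnSeries.coeff_single] at hk
    rw [if_neg (by norm_num), if_pos rfl] at hk
    simp only [mul_zero, zero_mul, add_zero, zero_add, neg_zero, sub_zero] at hk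
    exact hq₀ hk.symm
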